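/- The binary entropy function h₂(p) = −p·log₂ p − (1−p)·log₂(1−p) (with h₂(0)=h₂(1)=0) satisfies h₂(p) ≤ 2√(p(1−p)) for all p ∈ [0,1], i.e., the binary entropy is upper-bounded by the Bhattacharyya parameter of the BSC. -/

import Mathlib

open Real Set

/-- `2t ≤ log(1+t) - log(1-t)` for `t ∈ [0,1)`. -/
lemma two_mul_le_log_div {t : ℝ} (ht0 : 0 ≤ t) (ht1 : t < 1) :
    2 * t ≤ Real.log (1 + t) - Real.log (1 - t) := by
  set f : ℝ → ℝ := fun t => Real.log (1 + t) - Real.log (1 - t) - 2 * t with hf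
  have hder : ∀ x ∈ Ioo (0:ℝ) 1,
      HasDerivAt f (1/(1+x) - (-1)/(1-x) - 2) x := by
    intro x hx
    have h1 : (0:ℝ) < 1 + x := by linarith [hx.1]
    have h2 : (0:ℝ) < 1 - x := by linarith [hx.2]
    have d1 : HasDerivAt (fun t : ℝ => 1 + t) 1 x := by
      simpa using (hasDerivAt_id x).const_add 1
    have d2 : HasDerivAt (fun t : ℝ => 1 - t) (-1) x := by
      simpa using (hasDerivAt_id x).const_sub 1
    have l1 : HasDerivAt (fun t : ℝ => Real.log (1 + t)) (1/(1+x)) x := d1.log h1.ne'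
    have l2 : HasDerivAt (fun t : ℝ => Real.log (1 - t)) ((-1)/(1-x)) x := d2.log h2.ne'
    have l3 : HasDerivAt (fun t : ℝ => 2 * t) 2 x := by
      simpa using (hasDerivAt_id x).const_mul 2
    exact (l1.sub l2).sub l3
  have hmono : MonotoneOn f (Ico (0:ℝ) 1) := by
    apply monotoneOn_of_deriv_nonneg (convex_Ico 0 1)
    · apply ContinuousOn.sub
      apply ContinuousOn.sub
      · exact (continuousOn_const.add continuousOn_id).log
          (fun x hx => by have := hx.1; dsimp; linarith)
      · exact (continuousOn_const.sub continuousOn_id).log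
          (fun x hx => by have := hx.2; dsimp; nlinarith)
      · exact continuousOn_const.mul continuousOn_id
    · rw [interior_Ico]
      intro x hx
      exact (hder x hx).differentiableAt.differentiableWithinAt
    · rw [interior_Ico]
      intro x hx
      rw [(hder x hx).deriv]
      have h1 : (0:ℝ) < 1 + x := by linarith [hx.1]
      have h2 : (0:ℝ) < 1 - x := by linarith [hx.2]
      have e : 1 / (1 + x) - -1 / (1 - x) - 2 = 2*x^2 / ((1+x)*(1-x)) := by
        field_simp; ring
      rw [e]
      positivity
  have h0 : f 0 ≤ f t := hmono (by constructor <;> norm_num) ⟨ht0, ht1⟩ ht0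
  have : f 0 = 0 := by simp [hf]
  simp only [hf] at h0
  norm_num at h0
  linarith

lemma pinsker_half {p : ℝ} (hp : 1/2 ≤ p) (hp1 : p < 1) :
    2 * (p - 1/2)^2 ≤ p * Real.log p + (1-p) * Real.log (1-p) + Real.log 2 := by
  set F : ℝ → ℝ := fun p => p * Real.log p + (1-p) * Real.log (1-p) + Real.log 2
      - 2 * (p - 1/2)^2 with hF
  have hder : ∀ x ∈ Ioo (1/2 : ℝ) 1,
      HasDerivAt F (Real.log x - Real.log (1-x) - 4*(x - 1/2)) x := by
    intro x hx
    have h0 : (0:ℝ) < x := by linarith [hx.1]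
    have h1 : (0:ℝ) < 1 - x := by linarith [hx.2]
    have d1 : HasDerivAt (fun p : ℝ => p * Real.log p) (Real.log x + 1) x := by
      have := (hasDerivAt_id x).mul (Real.hasDerivAt_log h0.ne')
      refine this.congr_deriv ?_
      simp only [id, one_mul, mul_inv_cancel₀ h0.ne']
    have d2 : HasDerivAt (fun p : ℝ => (1-p) * Real.log (1-p))
        (-(Real.log (1-x)) - 1) x := by
      have inner : HasDerivAt (fun p : ℝ => 1 - p) (-1) x := by
        simpa using (hasDerivAt_id x).const_sub 1
      have outer : HasDerivAt (fun y : ℝ => y * Real.log y) (Real.log (1-x) + 1) (1-x) := by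
        have := (hasDerivAt_id (1-x)).mul (Real.hasDerivAt_log h1.ne')
        refine this.congr_deriv ?_
        simp only [id, one_mul, mul_inv_cancel₀ h1.ne']
      have comp := outer.comp x inner
      have comp' : HasDerivAt (fun p : ℝ => (1-p) * Real.log (1-p))
          ((Real.log (1-x) + 1) * (-1)) x := comp
      convert comp' using 1
      ring
    have d3 : HasDerivAt (fun p : ℝ => 2 * (p - 1/2)^2) (4*(x - 1/2)) x := by
      have : HasDerivAt (fun p : ℝ => (p - 1/2)^2) (2 * (x - 1/2)^1 * 1) x :=
        ((hasDerivAt_id x).sub_const (1/2)).pow 2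
      have := this.const_mul 2
      refine this.congr_deriv ?_
      ring
    have := ((d1.add d2).add_const (Real.log 2)).sub d3
    refine this.congr_deriv ?_
    ring
  have hmono : MonotoneOn F (Ico (1/2 : ℝ) 1) := by
    apply monotoneOn_of_deriv_nonneg (convex_Ico _ _)
    · apply ContinuousOn.sub
      apply ContinuousOn.add
      apply ContinuousOn.add
      · exact continuousOn_id.mul (Real.continuousOn_log.comp continuousOn_id
          (fun x hx => by have := hx.1; simp; intro h; simp [h] at this; linarith))
      · exact (continuousOn_const.sub continuousOn_id).mul
          ((continuousOn_const.sub continuousOn_id).log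
            (fun x hx => by have := hx.2; dsimp; nlinarith))
      · exact continuousOn_const
      · exact (continuousOn_const.mul ((continuousOn_id.sub continuousOn_const).pow 2))
    · rw [interior_Ico]
      intro x hx
      exact (hder x hx).differentiableAt.differentiableWithinAt
    · rw [interior_Ico]
      intro x hx
      rw [(hder x hx).deriv]
      have h0 : (0:ℝ) < x := by linarith [hx.1]
      have h1 : (0:ℝ) < 1 - x := by linarith [hx.2]
      have ht0 : (0:ℝ) ≤ 2*x - 1 := by linarith [hx.1]
      have ht1 : 2*x - 1 < 1 := by linarith [hx.2]
      have key := two_mul_le_log_div ht0 ht1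
      have e1 : (1 : ℝ) + (2*x - 1) = 2 * x := by ring
      have e2 : (1 : ℝ) - (2*x - 1) = 2 * (1 - x) := by ring
      rw [e1, e2, Real.log_mul (by norm_num) h0.ne',
        Real.log_mul (by norm_num) h1.ne'] at key
      linarith
  have h0 : F (1/2) ≤ F p := hmono (by constructor <;> norm_num) ⟨hp, hp1⟩ hp
  have hF0 : F (1/2) = 0 := by
    have : Real.log (1/2 : ℝ) = - Real.log 2 := by
      rw [one_div, Real.log_inv]
    simp only [hF]
    rw [show (1:ℝ) - 1/2 = 1/2 by norm_num, this]
    ring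
  simp only [hF] at h0
  rw [hF] at hF0
  simp only at hF0
  linarith

lemma pinsker {p : ℝ} (h0 : 0 < p) (h1 : p < 1) :
    2 * (p - 1/2)^2 ≤ p * Real.log p + (1-p) * Real.log (1-p) + Real.log 2 := by
  rcases le_or_gt (1/2) p with h | h
  · exact pinsker_half h h1
  · have key := pinsker_half (p := 1 - p) (by linarith) (by linarith)
    have e : (1:ℝ) - (1 - p) = p := by ring
    rw [e] at key
    nlinarith [key]

lemma sub_inv_sub_log_nonneg {u : ℝ} (hu : 1 ≤ u) :
    0 ≤ u - u⁻¹ - 2 * Real.log u := by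
  set g : ℝ → ℝ := fun u => u - u⁻¹ - 2 * Real.log u with hg
  have hder : ∀ x ∈ Ioi (1:ℝ),
      HasDerivAt g (1 - (-(x^2)⁻¹) - 2 * x⁻¹) x := by
    intro x hx
    have h0 : (0:ℝ) < x := by linarith [mem_Ioi.mp hx]
    have d1 : HasDerivAt (fun u : ℝ => u⁻¹) (-(x^2)⁻¹) x := hasDerivAt_inv h0.ne'
    have d2 : HasDerivAt (fun u : ℝ => 2 * Real.log u) (2 * x⁻¹) x := by
      simpa using (Real.hasDerivAt_log h0.ne').const_mul 2
    exact ((hasDerivAt_id x).sub d1).sub d2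
  have hmono : MonotoneOn g (Ici (1:ℝ)) := by
    apply monotoneOn_of_deriv_nonneg (convex_Ici _)
    · apply ContinuousOn.sub
      apply ContinuousOn.sub
      · exact continuousOn_id
      · exact continuousOn_inv₀.mono (fun x hx => by
          have : (1:ℝ) ≤ x := hx
          simp; intro h; simp [h] at this; linarith)
      · exact continuousOn_const.mul (Real.continuousOn_log.mono (fun x hx => by
          have : (1:ℝ) ≤ x := hx
          simp; intro h; simp [h] at this; linarith))
    · rw [interior_Ici]
      intro x hx
      exact (hder x hx).differentiableAt.differentiableWithinAt
    · rw [interior_Ici]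
      intro x hx
      rw [(hder x hx).deriv]
      have h0 : (0:ℝ) < x := by linarith [mem_Ioi.mp hx]
      have e : 1 - (-(x^2)⁻¹) - 2 * x⁻¹ = (1 - x⁻¹)^2 := by
        field_simp
        ring
      rw [e]
      positivity
  have h0 : g 1 ≤ g u := hmono (by norm_num) hu hu
  have : g 1 = 0 := by simp [hg]
  simp only [hg] at h0 this
  linarith

lemma neg_mul_log_le {p : ℝ} (h0 : 0 < p) (h1 : p ≤ 1) :
    -(p * Real.log p) ≤ (1 - p) * Real.sqrt p := by
  have hsp : 0 < Real.sqrt p := Real.sqrt_pos.mpr h0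
  have hsp2 : Real.sqrt p * Real.sqrt p = p := Real.mul_self_sqrt h0.le
  have hu : 1 ≤ (Real.sqrt p)⁻¹ := by
    rw [le_inv_comm₀ (by norm_num) hsp]
    norm_num
    exact h1
  have key := sub_inv_sub_log_nonneg hu
  rw [inv_inv, Real.log_inv] at key
  -- key : 0 ≤ (√p)⁻¹ - √p + 2 * log (√p)... careful signs
  have hlog : Real.log (Real.sqrt p) = Real.log p / 2 := Real.log_sqrt h0.le
  rw [hlog] at key
  -- key : 0 ≤ (√p)⁻¹ - √p - 2 * -(log p / 2) = (√p)⁻¹ - √p + log p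
  have key2 : -Real.log p ≤ (Real.sqrt p)⁻¹ - Real.sqrt p := by linarith
  have := mul_le_mul_of_nonneg_left key2 h0.le
  calc -(p * Real.log p) = p * -Real.log p := by ring
    _ ≤ p * ((Real.sqrt p)⁻¹ - Real.sqrt p) := this
    _ = (1 - p) * Real.sqrt p := by
        field_simp
        nlinarith [hsp2]



/-- The binary entropy function (in bits); since `Real.logb 2 0 = 0`, this
agrees with the convention `h₂(0) = h₂(1) = 0`. -/
noncomputable def binEnt (p : ℝ) : ℝ :=
  -p * Real.logb 2 p - (1 - p) * Real.logb 2 (1 - p)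

/-- The binary entropy is bounded above by the BSC Bhattacharyya parameter:
`h₂(p) ≤ 2√(p(1−p))` for `p ∈ [0,1]`. -/
theorem binEnt_le_bhattacharyya (p : ℝ) (hp : p ∈ Set.Icc (0:ℝ) 1) :
    binEnt p ≤ 2 * Real.sqrt (p * (1 - p)) := by
  obtain ⟨hp0, hp1⟩ := hp
  rcases eq_or_lt_of_le hp0 with h0 | h0
  · simp [binEnt, ← h0]
  rcases eq_or_lt_of_le hp1 with h1 | h1
  · simp [binEnt, h1]
  -- 0 < p < 1
  have hlog2 : (0:ℝ) < Real.log 2 := Real.log_pos (by norm_num)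
  have e : binEnt p = (-(p * Real.log p) - (1-p) * Real.log (1-p)) / Real.log 2 := by
    rw [binEnt, Real.logb, Real.logb]
    ring
  rw [e, div_le_iff₀ hlog2]
  have hq0 : 0 < 1 - p := by linarith
  have hlb := Real.log_two_gt_d9
  have hub := Real.log_two_lt_d9
  rcases le_or_gt (p * (1-p)) (1/5) with hc | hc
  · -- case A : small p(1-p)
    set a := Real.sqrt p with ha
    set b := Real.sqrt (1-p) with hb
    have ha0 : 0 ≤ a := Real.sqrt_nonneg _
    have hb0 : 0 ≤ b := Real.sqrt_nonneg _
    have ha2 : a * a = p := Real.mul_self_sqrt hp0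
    have hb2 : b * b = 1 - p := Real.mul_self_sqrt hq0.le
    have hsab : Real.sqrt (p * (1-p)) = a * b := Real.sqrt_mul hp0 _
    have t1 : -(p * Real.log p) ≤ (1 - p) * a := neg_mul_log_le h0 hp1
    have t2 : -((1-p) * Real.log (1-p)) ≤ p * b := by
      have := neg_mul_log_le (p := 1 - p) hq0 (by linarith)
      rw [show (1:ℝ) - (1-p) = p by ring] at this
      exact this
    have hab5 : a * b ≤ 0.44722 := by
      nlinarith [mul_nonneg ha0 hb0, ha2, hb2, hc]
    have hsum : a + b ≤ 2 * Real.log 2 := by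
      nlinarith [ha2, hb2, hab5, ha0, hb0, hlb, mul_nonneg ha0 hb0]
    have key : (1 - p) * a + p * b = (a * b) * (a + b) := by
      linear_combination (-a) * hb2 + (-b) * ha2
    have final : (a * b) * (a + b) ≤ (a * b) * (2 * Real.log 2) :=
      mul_le_mul_of_nonneg_left hsum (mul_nonneg ha0 hb0)
    rw [hsab]
    nlinarith [t1, t2, key, final]
  · -- case B : p(1-p) > 1/5, use Pinsker
    have hpk := pinsker h0 h1
    set S := Real.sqrt (p * (1-p)) with hS
    have hS0 : 0 ≤ S := Real.sqrt_nonneg _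
    have hS2 : S * S = p * (1-p) := Real.mul_self_sqrt (by positivity)
    have hSl : 0.447 ≤ S := by nlinarith [hS2, hc, hS0, sq_nonneg (S - 0.447)]
    have hSu : S ≤ 1/2 := by nlinarith [hS2, hS0, sq_nonneg (p - 1/2)]
    have hsq : (p - 1/2)^2 = 1/4 - S * S := by rw [hS2]; ring
    -- goal : -(p log p) - (1-p) log(1-p) ≤ 2 S log 2
    have hh : -(p * Real.log p) - (1-p) * Real.log (1-p) ≤ Real.log 2 - 2 * (1/4 - S * S) := by
      rw [← hsq]; linarith [hpk]
    have hA : (0:ℝ) ≤ 1 - 2*S := by linarith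
    have hB : Real.log 2 ≤ (1 + 2*S)/2 := by linarith
    have hC := mul_le_mul_of_nonneg_left hB hA
    have e2 : (1-2*S)*((1+2*S)/2) = 1/2 - 2*(S*S) := by ring
    have e3 : (1-2*S)*Real.log 2 = Real.log 2 - 2*S*Real.log 2 := by ring
    rw [e2, e3] at hC
    linarith [hh, hC]
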